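/- Let r ≥ 1 and n ≥ 0 be integers, q real with 0 < q < 1, x a real number, w_1, …, w_r positive real numbers, and a_1, …, a_r positive real numbers. Then the multiple series 2^r Σ_{(m_1,…,m_r)∈ℕ^r} (-1)^{m_1+⋯+m_r} q^{a_1 m_1 + ⋯ + a_r m_r} [x + w_1 m_1 + ⋯ + w_r m_r]_q^n converges absolutely and equals E_{n,q}^{(r)}(x|w_1,…,w_r; a_1,…,a_r) = (2^r/(1-q)^n) Σ_{l=0}^n C(n,l) (-1)^l q^{lx} / ((1+q^{l w_1 + a_1})⋯(1+q^{l w_r + a_r})). -/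
import Mathlib


open Finset

/-- The `q`-analogue `[y]_q = (1 - q^y)/(1 - q)` (real power). -/
noncomputable def qnum (q y : ℝ) : ℝ := (1 - q ^ y) / (1 - q)

set_option maxHeartbeats 1000000 in
/-- Auxiliary: a multiple series of a product factors as a product of series. -/
lemma pi_tsum_prod : ∀ (r : ℕ) (g : Fin r → ℕ → ℝ),
    (∀ i, Summable fun k => |g i k|) →
    Summable (fun m : Fin r → ℕ => ∏ i, g i (m i)) ∧
      (∑' m : Fin r → ℕ, ∏ i, g i (m i)) = ∏ i, ∑' k, g i k := by
  intro r
  induction r with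
  | zero =>
    intro g _
    constructor
    · exact Summable.of_finite
    · have h1 : ∀ m : Fin 0 → ℕ, (∏ i, g i (m i)) = 1 := by
        intro m; simp
      rw [tsum_congr h1,
        tsum_eq_single (fun i : Fin 0 => i.elim0)
          (fun b hb => (hb (Subsingleton.elim b _)).elim)]
      simp
  | succ r ih =>
    intro g hg
    obtain ⟨g', hg'⟩ : ∃ g' : Fin r → ℕ → ℝ, g' = fun i => g i.succ := ⟨_, rfl⟩
    have hg'abs : ∀ i, Summable fun k => |g' i k| := by
      intro i; rw [hg']; exact hg i.succ
    obtain ⟨ihS, ihT⟩ := ih g' hg'abs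
    let e : ℕ × (Fin r → ℕ) ≃ (Fin (r + 1) → ℕ) := Fin.consEquiv (fun _ => ℕ)
    have hnorm0 : Summable fun k => ‖g 0 k‖ := by
      simpa only [Real.norm_eq_abs] using hg 0
    have hnormP : Summable fun v : Fin r → ℕ => ‖∏ i, g' i (v i)‖ := by
      simpa only [Real.norm_eq_abs] using ihS.abs
    have key1 : ∀ P : (Fin r → ℕ) → ℝ, (Summable fun v => ‖P v‖) →
        Summable fun p : ℕ × (Fin r → ℕ) => g 0 p.1 * P p.2 :=
      fun P hP => summable_mul_of_summable_norm hnorm0 hP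
    have key2 : ∀ P : (Fin r → ℕ) → ℝ, (Summable fun v => ‖P v‖) →
        (∑' k, g 0 k) * (∑' v, P v) = ∑' p : ℕ × (Fin r → ℕ), g 0 p.1 * P p.2 :=
      fun P hP => tsum_mul_tsum_of_summable_norm hnorm0 hP
    have hProd2 : Summable fun p : ℕ × (Fin r → ℕ) =>
        g 0 p.1 * ∏ i, g' i (p.2 i) :=
      key1 (fun v => ∏ i, g' i (v i)) hnormP
    have hcomp : ∀ p : ℕ × (Fin r → ℕ),
        (∏ i, g i (e p i)) = g 0 p.1 * ∏ i, g' i (p.2 i) := by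
      intro p
      rw [Fin.prod_univ_succ]
      simp [hg', e, Fin.consEquiv]
    constructor
    · have h2 : Summable fun p : ℕ × (Fin r → ℕ) => ∏ i, g i (e p i) :=
        hProd2.congr (fun p => (hcomp p).symm)
      exact e.summable_iff.mp h2
    · rw [← Equiv.tsum_eq e (fun m : Fin (r + 1) → ℕ => ∏ i, g i (m i)),
        tsum_congr hcomp, ← key2 (fun v => ∏ i, g' i (v i)) hnormP,
        Fin.prod_univ_succ, ihT]
      simp only [hg']

theorem stmt_7 (r n : ℕ) (hr : 1 ≤ r) (q : ℝ) (hq0 : 0 < q) (hq1 : q < 1) (x : ℝ)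
    (w a : Fin r → ℝ) (hw : ∀ i, 0 < w i) (ha : ∀ i, 0 < a i) :
    Summable (fun m : Fin r → ℕ =>
      |(-1 : ℝ) ^ (∑ i, m i) * q ^ (∑ i, a i * m i) * qnum q (x + ∑ i, w i * m i) ^ n|) ∧
    (2 : ℝ) ^ r * ∑' m : Fin r → ℕ,
        (-1 : ℝ) ^ (∑ i, m i) * q ^ (∑ i, a i * m i) * qnum q (x + ∑ i, w i * m i) ^ n =
      (2 : ℝ) ^ r / (1 - q) ^ n *
        ∑ l ∈ range (n + 1),
          (n.choose l : ℝ) * (-1) ^ l * q ^ ((l : ℝ) * x) /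
            ∏ j, (1 + q ^ ((l : ℝ) * w j + a j)) := by
  have h1q : (0 : ℝ) < 1 - q := by linarith
  -- the coefficient and the geometric factor
  set c : ℕ → ℝ := fun l => (n.choose l : ℝ) * (-1) ^ l * q ^ ((l : ℝ) * x) / (1 - q) ^ n
    with hc
  set g : ℕ → Fin r → ℕ → ℝ := fun l i k => (-(q ^ ((l : ℝ) * w i + a i))) ^ k with hgdef
  have hepos : ∀ (l : ℕ) (i : Fin r), 0 < (l : ℝ) * w i + a i := by
    intro l i
    have : (0 : ℝ) ≤ (l : ℝ) * w i := mul_nonneg (Nat.cast_nonneg l) (hw i).le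
    linarith [ha i]
  have hqe : ∀ (l : ℕ) (i : Fin r), 0 < q ^ ((l : ℝ) * w i + a i) ∧
      q ^ ((l : ℝ) * w i + a i) < 1 := by
    intro l i
    exact ⟨Real.rpow_pos_of_pos hq0 _,
      Real.rpow_lt_one hq0.le hq1 (hepos l i)⟩
  have hgabs : ∀ (l : ℕ) (i : Fin r), Summable fun k => |g l i k| := by
    intro l i
    have h := (hqe l i)
    have : (fun k : ℕ => |g l i k|) = fun k => (q ^ ((l : ℝ) * w i + a i)) ^ k := by
      funext k
      simp [hgdef, abs_pow, abs_neg, abs_of_pos h.1]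
    rw [this]
    exact summable_geometric_of_lt_one h.1.le h.2
  -- key pointwise expansion
  have hterm : ∀ m : Fin r → ℕ,
      (-1 : ℝ) ^ (∑ i, m i) * q ^ (∑ i, a i * m i) * qnum q (x + ∑ i, w i * m i) ^ n =
      ∑ l ∈ range (n + 1), c l * ∏ i, g l i (m i) := by
    intro m
    set S : ℝ := ∑ i, w i * m i with hS
    set A : ℝ := ∑ i, a i * m i with hA
    have hgprod : ∀ l : ℕ, (∏ i, g l i (m i)) =
        (-1 : ℝ) ^ (∑ i, m i) * q ^ ((l : ℝ) * S + A) := by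
      intro l
      have h1 : ∀ i : Fin r, g l i (m i) =
          (-1 : ℝ) ^ (m i) * q ^ (((l : ℝ) * w i + a i) * m i) := by
        intro i
        have e1 : g l i (m i) = (-(q ^ ((l : ℝ) * w i + a i))) ^ (m i) := rfl
        rw [e1, neg_pow, ← Real.rpow_natCast (q ^ ((l : ℝ) * w i + a i)) (m i),
          ← Real.rpow_mul hq0.le]
      rw [Finset.prod_congr rfl (fun i _ => h1 i), Finset.prod_mul_distrib]
      congr 1
      · rw [Finset.prod_pow_eq_pow_sum]
      · rw [← Real.rpow_sum_of_pos hq0]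
        congr 1
        rw [hS, hA, Finset.mul_sum, ← Finset.sum_add_distrib]
        exact Finset.sum_congr rfl (fun i _ => by ring)
    -- expand qnum power via binomial theorem
    have hqnum : qnum q (x + S) ^ n =
        ∑ l ∈ range (n + 1), (-1 : ℝ) ^ l * (n.choose l : ℝ) * q ^ (((l : ℝ)) * x)
          * q ^ ((l : ℝ) * S) / (1 - q) ^ n := by
      rw [qnum, div_pow]
      have : (1 - q ^ (x + S)) = -(q ^ (x + S)) + 1 := by ring
      rw [this, add_pow]
      rw [Finset.sum_div]
      refine Finset.sum_congr rfl (fun l _ => ?_)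
      have h2 : (-(q ^ (x + S))) ^ l = (-1 : ℝ) ^ l * q ^ ((x + S) * (l : ℝ)) := by
        rw [neg_pow]
        congr 1
        rw [← Real.rpow_natCast (q ^ (x + S)) l, ← Real.rpow_mul hq0.le]
      rw [h2]
      have h3 : q ^ ((x + S) * (l : ℝ)) = q ^ ((l : ℝ) * x) * q ^ ((l : ℝ) * S) := by
        rw [← Real.rpow_add hq0]
        congr 1
        ring
      rw [h3]
      ring
    rw [hqnum, Finset.mul_sum]
    refine Finset.sum_congr rfl (fun l _ => ?_)
    rw [hgprod l]
    simp only [hc]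
    have h4 : q ^ ((l : ℝ) * S + A) = q ^ ((l : ℝ) * S) * q ^ A :=
      Real.rpow_add hq0 _ _
    rw [h4]
    ring
  -- summability of each l-piece
  have hsum_l : ∀ l ∈ range (n + 1),
      Summable (fun m : Fin r → ℕ => c l * ∏ i, g l i (m i)) := by
    intro l _
    exact ((pi_tsum_prod r (g l) (hgabs l)).1).mul_left (c l)
  have hsum_total : Summable (fun m : Fin r → ℕ =>
      (-1 : ℝ) ^ (∑ i, m i) * q ^ (∑ i, a i * m i) * qnum q (x + ∑ i, w i * m i) ^ n) := by
    have := summable_sum hsum_l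
    exact this.congr (fun m => (hterm m).symm)
  refine ⟨summable_abs_iff.mpr hsum_total, ?_⟩
  have htsum : (∑' m : Fin r → ℕ,
      (-1 : ℝ) ^ (∑ i, m i) * q ^ (∑ i, a i * m i) * qnum q (x + ∑ i, w i * m i) ^ n) =
      ∑ l ∈ range (n + 1), c l * ∏ i, (1 + q ^ ((l : ℝ) * w i + a i))⁻¹ := by
    rw [tsum_congr hterm, Summable.tsum_finsetSum hsum_l]
    refine Finset.sum_congr rfl (fun l _ => ?_)
    rw [tsum_mul_left, (pi_tsum_prod r (g l) (hgabs l)).2]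
    congr 1
    refine Finset.prod_congr rfl (fun i _ => ?_)
    have habs : |(-(q ^ ((l : ℝ) * w i + a i)))| < 1 := by
      rw [abs_neg, abs_of_pos (hqe l i).1]
      exact (hqe l i).2
    simp only [hgdef]
    rw [tsum_geometric_of_abs_lt_one habs, sub_neg_eq_add]
  rw [htsum, Finset.mul_sum, Finset.mul_sum]
  refine Finset.sum_congr rfl (fun l _ => ?_)
  simp only [hc]
  rw [Finset.prod_inv_distrib]
  ring
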